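/- arXiv:1807.09699 — 6 statements merged into one kernel-verified Lean document; each statement's English description precedes it below -/
import Mathlib

section
/- For any symmetric matrices A, B, C, D : ι → ι → ℝ, the contraction of Kulkarni–Nomizu products satisfies [(A⊙B)·(C⊙D)]_{μνλκ} = 2[((A·C)⊙(B·D))_{μνλκ} + ((A·D)⊙(B·C))_{μνλκ}] for all indices μ, ν, λ, κ. -/
open Finset

variable {ι : Type*} [Fintype ι] [DecidableEq ι]

/-- Kulkarni–Nomizu product of two 2-tensors:
`(A⊙B)_{μνλκ} = A_{μλ}B_{νκ} − A_{νλ}B_{μκ} − A_{μκ}B_{νλ} + A_{νκ}B_{μλ}`. -/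
def KN (A B : ι → ι → ℝ) : ι → ι → ι → ι → ℝ :=
  fun μ ν l κ => A μ l * B ν κ - A ν l * B μ κ - A μ κ * B ν l + A ν κ * B μ l

/-- Contraction of two 2-tensors via the inverse metric:
`(A·B)_{μκ} = Σ_{ν,λ} A_{μν}(Ḡ⁻¹)_{νλ}B_{λκ}`. -/
def dot2 (Ginv : ι → ι → ℝ) (A B : ι → ι → ℝ) : ι → ι → ℝ :=
  fun μ κ => ∑ ν, ∑ l, A μ ν * Ginv ν l * B l κ

/-- Contraction of two 4-tensors via the inverse metric:
`(R·S)_{μνλκ} = Σ R_{μνστ}(Ḡ⁻¹)_{σσ'}(Ḡ⁻¹)_{ττ'}S_{σ'τ'λκ}`. -/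
def dot4 (Ginv : ι → ι → ℝ) (R S : ι → ι → ι → ι → ℝ) : ι → ι → ι → ι → ℝ :=
  fun μ ν l κ => ∑ σ, ∑ τ, ∑ σ', ∑ τ', R μ ν σ τ * Ginv σ σ' * Ginv τ τ' * S σ' τ' l κ

/-- Trace of a 2-tensor: `tr A = Σ_{μ,ν} (Ḡ⁻¹)_{μν}A_{νμ}`. -/
def tr2 (Ginv : ι → ι → ℝ) (A : ι → ι → ℝ) : ℝ :=
  ∑ μ, ∑ ν, Ginv μ ν * A ν μ

/-- Partial trace of a 4-tensor: `R_{μν}{}^ν{}_κ = Σ_{ν,ν'} (Ḡ⁻¹)_{νν'} R_{μνν'κ}`. -/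
def ptr4 (Ginv : ι → ι → ℝ) (R : ι → ι → ι → ι → ℝ) : ι → ι → ℝ :=
  fun μ κ => ∑ ν, ∑ ν', Ginv ν ν' * R μ ν ν' κ

/-- Full trace of a 4-tensor: `R_{μν}{}^{μν} = Σ (Ḡ⁻¹)_{μμ'}(Ḡ⁻¹)_{νν'} R_{μνμ'ν'}`. -/
def ftr4 (Ginv : ι → ι → ℝ) (R : ι → ι → ι → ι → ℝ) : ℝ :=
  ∑ μ, ∑ μ', ∑ ν, ∑ ν', Ginv μ μ' * Ginv ν ν' * R μ ν μ' ν'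


private lemma key_factor (Ginv X Y Z W : ι → ι → ℝ) (a b c d : ι) :
    (∑ σ, ∑ τ, ∑ σ', ∑ τ', (X a σ * Ginv σ σ' * Z σ' c) * (Y b τ * Ginv τ τ' * W τ' d))
      = dot2 Ginv X Z a c * dot2 Ginv Y W b d := by
  simp only [dot2]
  rw [Finset.sum_mul_sum]
  exact Finset.sum_congr rfl fun σ _ => Finset.sum_congr rfl fun τ _ =>
    (Finset.sum_mul_sum _ _ _ _).symm

/-- For symmetric matrices `A, B, C, D`, the contraction of
Kulkarni–Nomizu products satisfies
`[(A⊙B)·(C⊙D)]_{μνλκ} = 2[((A·C)⊙(B·D)) + ((A·D)⊙(B·C))]_{μνλκ}`. -/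
theorem kn_dot_kn {n : ℕ} (hcard : Fintype.card ι = n)
    (Gbar Ginv : ι → ι → ℝ)
    (hGsymm : ∀ μ ν, Gbar μ ν = Gbar ν μ)
    (hGinv : ∀ μ l, ∑ ν, Gbar μ ν * Ginv ν l = if μ = l then (1 : ℝ) else 0)
    (A B C D : ι → ι → ℝ)
    (hA : ∀ μ ν, A μ ν = A ν μ) (hB : ∀ μ ν, B μ ν = B ν μ)
    (hC : ∀ μ ν, C μ ν = C ν μ) (hD : ∀ μ ν, D μ ν = D ν μ) :
    ∀ μ ν l κ,
      dot4 Ginv (KN A B) (KN C D) μ ν l κ =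
        2 * (KN (dot2 Ginv A C) (dot2 Ginv B D) μ ν l κ
          + KN (dot2 Ginv A D) (dot2 Ginv B C) μ ν l κ) := by
  intro μ ν l κ
  have h1 : dot4 Ginv (KN A B) (KN C D) μ ν l κ =
      ∑ σ, ∑ τ, ∑ σ', ∑ τ',
        ((A μ σ * Ginv σ σ' * C σ' l) * (B ν τ * Ginv τ τ' * D τ' κ)
        - (A μ σ * Ginv σ σ' * D σ' κ) * (B ν τ * Ginv τ τ' * C τ' l)
        - (A μ σ * Ginv σ σ' * C σ' κ) * (B ν τ * Ginv τ τ' * D τ' l)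
        + (A μ σ * Ginv σ σ' * D σ' l) * (B ν τ * Ginv τ τ' * C τ' κ)
        - (A ν σ * Ginv σ σ' * C σ' l) * (B μ τ * Ginv τ τ' * D τ' κ)
        + (A ν σ * Ginv σ σ' * D σ' κ) * (B μ τ * Ginv τ τ' * C τ' l)
        + (A ν σ * Ginv σ σ' * C σ' κ) * (B μ τ * Ginv τ τ' * D τ' l)
        - (A ν σ * Ginv σ σ' * D σ' l) * (B μ τ * Ginv τ τ' * C τ' κ)
        - (B ν σ * Ginv σ σ' * C σ' l) * (A μ τ * Ginv τ τ' * D τ' κ)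
        + (B ν σ * Ginv σ σ' * D σ' κ) * (A μ τ * Ginv τ τ' * C τ' l)
        + (B ν σ * Ginv σ σ' * C σ' κ) * (A μ τ * Ginv τ τ' * D τ' l)
        - (B ν σ * Ginv σ σ' * D σ' l) * (A μ τ * Ginv τ τ' * C τ' κ)
        + (B μ σ * Ginv σ σ' * C σ' l) * (A ν τ * Ginv τ τ' * D τ' κ)
        - (B μ σ * Ginv σ σ' * D σ' κ) * (A ν τ * Ginv τ τ' * C τ' l)
        - (B μ σ * Ginv σ σ' * C σ' κ) * (A ν τ * Ginv τ τ' * D τ' l)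
        + (B μ σ * Ginv σ σ' * D σ' l) * (A ν τ * Ginv τ τ' * C τ' κ)) := by
    simp only [dot4, KN]
    exact Finset.sum_congr rfl fun σ _ => Finset.sum_congr rfl fun τ _ =>
      Finset.sum_congr rfl fun σ' _ => Finset.sum_congr rfl fun τ' _ => by ring
  rw [h1]
  simp only [Finset.sum_add_distrib, Finset.sum_sub_distrib, key_factor]
  simp only [KN]
  ring
end

section
/- Under the projector hypotheses, the 4-tensor T = ρ[((n−2)(n−3)/2)(g⊙g) + (P⊙P) − (n−3)(g⊙P)] satisfies T·T = ρ²[(n−2)²(n−3)²(g⊙g) + 4(P⊙P) + 2(n−3)²(g⊙P)]. -/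
open Finset

open Matrix

variable {ι : Type*} [Fintype ι] [DecidableEq ι]

/-- The curvature 4-tensor of a generalized Schwarzschild–Tangherlini geometry,
`T = ρ[((n−2)(n−3)/2)(g⊙g) + (P⊙P) − (n−3)(g⊙P)]`. -/
noncomputable def Tgst (n : ℕ) (ρ : ℝ) (g P : ι → ι → ℝ) : ι → ι → ι → ι → ℝ :=
  fun μ ν l κ => ρ * (((n : ℝ) - 2) * ((n : ℝ) - 3) / 2 * KN g g μ ν l κ
    + KN P P μ ν l κ - ((n : ℝ) - 3) * KN g P μ ν l κ)

section Aux

set_option linter.unusedSectionVars false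

lemma mul_sum_sum' (f g : ι → ι → ℝ) :
    (∑ a, ∑ b, f a b) * (∑ c, ∑ d, g c d) = ∑ a, ∑ c, ∑ b, ∑ d, f a b * g c d := by
  rw [Finset.sum_mul_sum]
  exact Finset.sum_congr rfl fun a _ => Finset.sum_congr rfl fun c _ => Finset.sum_mul_sum _ _ _ _

lemma sum_swap4' (f : ι → ι → ι → ι → ℝ) :
    ∑ a, ∑ b, ∑ c, ∑ d, f a b c d = ∑ a, ∑ b, ∑ c, ∑ d, f b a d c := by
  rw [Finset.sum_comm]
  exact Finset.sum_congr rfl fun b _ => Finset.sum_congr rfl fun a _ => Finset.sum_comm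

lemma dot4_KN' (Ginv A B C D : ι → ι → ℝ) (μ ν l κ : ι) :
    dot4 Ginv (KN A B) (KN C D) μ ν l κ =
      2 * (KN (dot2 Ginv A C) (dot2 Ginv B D) μ ν l κ
         + KN (dot2 Ginv A D) (dot2 Ginv B C) μ ν l κ) := by
  set r12 : ι → ι → ι → ι → ℝ := fun σ τ σ' τ' =>
    (A μ σ * B ν τ - A ν σ * B μ τ) * Ginv σ σ' * Ginv τ τ' * KN C D σ' τ' l κ with hr12
  have h1 : dot4 Ginv (KN A B) (KN C D) μ ν l κ
      = (∑ σ, ∑ τ, ∑ σ', ∑ τ', r12 σ τ σ' τ')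
        + ∑ σ, ∑ τ, ∑ σ', ∑ τ', r12 τ σ τ' σ' := by
    rw [← Finset.sum_add_distrib]
    simp only [← Finset.sum_add_distrib]
    refine Finset.sum_congr rfl fun σ _ => Finset.sum_congr rfl fun τ _ =>
      Finset.sum_congr rfl fun σ' _ => Finset.sum_congr rfl fun τ' _ => ?_
    simp only [hr12, dot4, KN]
    ring
  have h2 : (∑ σ, ∑ τ, ∑ σ', ∑ τ', r12 τ σ τ' σ')
      = ∑ σ, ∑ τ, ∑ σ', ∑ τ', r12 σ τ σ' τ' := (sum_swap4' r12).symm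
  have h3 : (∑ σ, ∑ τ, ∑ σ', ∑ τ', r12 σ τ σ' τ')
      = KN (dot2 Ginv A C) (dot2 Ginv B D) μ ν l κ
        + KN (dot2 Ginv A D) (dot2 Ginv B C) μ ν l κ := by
    simp only [hr12, KN, dot2]
    simp only [mul_sum_sum']
    simp only [← Finset.sum_add_distrib, ← Finset.sum_sub_distrib]
    refine Finset.sum_congr rfl fun σ _ => Finset.sum_congr rfl fun τ _ =>
      Finset.sum_congr rfl fun σ' _ => Finset.sum_congr rfl fun τ' _ => by ring
  rw [h1, h2, h3]; ring

end Aux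

/-- Under the projector hypotheses,
`T·T = ρ²[(n−2)²(n−3)²(g⊙g) + 4(P⊙P) + 2(n−3)²(g⊙P)]`. -/
theorem Tgst_dot_Tgst {n : ℕ} (hn : 4 ≤ n) (hcard : Fintype.card ι = n)
    (Gbar Ginv g P : ι → ι → ℝ) (ρ : ℝ)
    (hGsymm : ∀ μ ν, Gbar μ ν = Gbar ν μ)
    (hGinv : ∀ μ l, ∑ ν, Gbar μ ν * Ginv ν l = if μ = l then (1 : ℝ) else 0)
    (hsplit : ∀ μ ν, Gbar μ ν = g μ ν + P μ ν)
    (hgsymm : ∀ μ ν, g μ ν = g ν μ) (hPsymm : ∀ μ ν, P μ ν = P ν μ)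
    (hgg : ∀ μ ν, dot2 Ginv g g μ ν = g μ ν)
    (hPP : ∀ μ ν, dot2 Ginv P P μ ν = P μ ν)
    (hgP : ∀ μ ν, dot2 Ginv g P μ ν = 0)
    (htrg : tr2 Ginv g = 2)
    (htrP : tr2 Ginv P = (n : ℝ) - 2)
    :
    ∀ μ ν l κ,
      dot4 Ginv (Tgst n ρ g P) (Tgst n ρ g P) μ ν l κ =
        ρ ^ 2 * (((n : ℝ) - 2) ^ 2 * ((n : ℝ) - 3) ^ 2 * KN g g μ ν l κ
          + 4 * KN P P μ ν l κ + 2 * ((n : ℝ) - 3) ^ 2 * KN g P μ ν l κ) := by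
  -- Ginv is symmetric
  have hGinvsymm : ∀ a b, Ginv a b = Ginv b a := by
    have h1 : (Matrix.of Gbar : Matrix ι ι ℝ) * Matrix.of Ginv = 1 := by
      ext a b
      simpa [Matrix.mul_apply, Matrix.one_apply] using hGinv a b
    have h2 : (Matrix.of Gbar : Matrix ι ι ℝ)ᵀ = Matrix.of Gbar := by
      ext a b; exact (hGsymm a b).symm
    have h3 : (Matrix.of Ginv : Matrix ι ι ℝ)ᵀ = Matrix.of Ginv := by
      calc (Matrix.of Ginv : Matrix ι ι ℝ)ᵀ
          = (Matrix.of Ginv)ᵀ * ((Matrix.of Gbar) * (Matrix.of Ginv)) := by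
            rw [h1, mul_one]
        _ = ((Matrix.of Ginv)ᵀ * (Matrix.of Gbar)ᵀ) * Matrix.of Ginv := by
            rw [mul_assoc, h2]
        _ = ((Matrix.of Gbar) * (Matrix.of Ginv))ᵀ * Matrix.of Ginv := by
            rw [Matrix.transpose_mul]
        _ = Matrix.of Ginv := by rw [h1, Matrix.transpose_one, one_mul]
    intro a b
    exact (congrFun (congrFun h3 a) b).symm
  -- the transposed cross contraction also vanishes
  have hPg : ∀ a b, dot2 Ginv P g a b = 0 := by
    intro a b
    calc dot2 Ginv P g a b
        = ∑ x, ∑ y, g b y * Ginv y x * P x a := by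
          refine Finset.sum_congr rfl fun x _ => Finset.sum_congr rfl fun y _ => ?_
          rw [hPsymm a x, hgsymm y b, hGinvsymm x y]; ring
      _ = ∑ y, ∑ x, g b y * Ginv y x * P x a := Finset.sum_comm
      _ = dot2 Ginv g P b a := rfl
      _ = 0 := hgP b a
  intro μ ν l κ
  -- expand T·T into the nine products of KN blocks
  have hexp : dot4 Ginv (Tgst n ρ g P) (Tgst n ρ g P) μ ν l κ
      = ρ ^ 2 * ((((n : ℝ) - 2) * ((n : ℝ) - 3) / 2) ^ 2 * dot4 Ginv (KN g g) (KN g g) μ ν l κ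
        + (((n : ℝ) - 2) * ((n : ℝ) - 3) / 2) * dot4 Ginv (KN g g) (KN P P) μ ν l κ
        - (((n : ℝ) - 2) * ((n : ℝ) - 3) / 2) * ((n : ℝ) - 3) * dot4 Ginv (KN g g) (KN g P) μ ν l κ
        + (((n : ℝ) - 2) * ((n : ℝ) - 3) / 2) * dot4 Ginv (KN P P) (KN g g) μ ν l κ
        + dot4 Ginv (KN P P) (KN P P) μ ν l κ
        - ((n : ℝ) - 3) * dot4 Ginv (KN P P) (KN g P) μ ν l κ
        - (((n : ℝ) - 2) * ((n : ℝ) - 3) / 2) * ((n : ℝ) - 3) * dot4 Ginv (KN g P) (KN g g) μ ν l κ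
        - ((n : ℝ) - 3) * dot4 Ginv (KN g P) (KN P P) μ ν l κ
        + ((n : ℝ) - 3) ^ 2 * dot4 Ginv (KN g P) (KN g P) μ ν l κ) := by
    simp only [dot4, Tgst]
    simp only [Finset.mul_sum, ← Finset.sum_add_distrib, ← Finset.sum_sub_distrib]
    refine Finset.sum_congr rfl fun σ _ => Finset.sum_congr rfl fun τ _ =>
      Finset.sum_congr rfl fun σ' _ => Finset.sum_congr rfl fun τ' _ => by ring
  rw [hexp]
  simp only [dot4_KN', KN]
  simp only [hgg, hPP, hgP, hPg]
  ring
end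

section
/- Under the projector hypotheses, the 4-tensor T = ρ[((n−2)(n−3)/2)(g⊙g) + (P⊙P) − (n−3)(g⊙P)] satisfies the full-trace identity (T·T)_{μν}{}^{μν} = 4(n−1)(n−2)²(n−3)·ρ². -/
open Finset

variable {ι : Type*} [Fintype ι] [DecidableEq ι]

set_option linter.unusedSectionVars false in
private lemma swapo (f : ι → ι → ℝ) : (∑ a, ∑ b, f a b) = ∑ b, ∑ a, f a b :=
  Finset.sum_comm

set_option linter.unusedSectionVars false in
private lemma sum4_rev (f : ι → ι → ι → ι → ℝ) :
    (∑ a, ∑ b, ∑ c, ∑ d, f a b c d) = ∑ d, ∑ c, ∑ b, ∑ a, f a b c d := by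
  calc (∑ a, ∑ b, ∑ c, ∑ d, f a b c d)
      = ∑ b, ∑ a, ∑ c, ∑ d, f a b c d := swapo _
    _ = ∑ b, ∑ c, ∑ a, ∑ d, f a b c d :=
        Finset.sum_congr rfl fun b _ => swapo _
    _ = ∑ c, ∑ b, ∑ a, ∑ d, f a b c d := swapo _
    _ = ∑ c, ∑ b, ∑ d, ∑ a, f a b c d :=
        Finset.sum_congr rfl fun c _ => Finset.sum_congr rfl fun b _ => swapo _
    _ = ∑ c, ∑ d, ∑ b, ∑ a, f a b c d :=
        Finset.sum_congr rfl fun c _ => swapo _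
    _ = ∑ d, ∑ c, ∑ b, ∑ a, f a b c d := swapo _

set_option linter.unusedSectionVars false in
private lemma fact2 (f g : ι → ι → ℝ) :
    (∑ a, ∑ b, ∑ c, ∑ d, f a b * g c d) = (∑ a, ∑ b, f a b) * (∑ c, ∑ d, g c d) := by
  simp only [← Finset.mul_sum, ← Finset.sum_mul]

set_option linter.unusedSectionVars false in
private lemma quad_factor (Ginv A B C D : ι → ι → ℝ) (μ ν l κ : ι) :
    (∑ σ, ∑ τ, ∑ σ', ∑ τ', (A μ σ * B ν τ) * Ginv σ σ' * Ginv τ τ' * (C σ' l * D τ' κ))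
      = dot2 Ginv A C μ l * dot2 Ginv B D ν κ := by
  have h : (∑ σ, ∑ τ, ∑ σ', ∑ τ', (A μ σ * B ν τ) * Ginv σ σ' * Ginv τ τ' * (C σ' l * D τ' κ))
      = ∑ σ, ∑ σ', ∑ τ, ∑ τ', (A μ σ * Ginv σ σ' * C σ' l) * (B ν τ * Ginv τ τ' * D τ' κ) := by
    refine Finset.sum_congr rfl fun σ _ => ?_
    rw [Finset.sum_comm]
    refine Finset.sum_congr rfl fun σ' _ => Finset.sum_congr rfl fun τ _ =>
      Finset.sum_congr rfl fun τ' _ => by ring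
  rw [h, fact2]
  rfl

set_option linter.unusedSectionVars false in
set_option maxHeartbeats 1000000 in
private lemma dot4_KN_KN (Ginv A B C D : ι → ι → ℝ) (μ ν l κ : ι) :
    dot4 Ginv (KN A B) (KN C D) μ ν l κ =
      2 * KN (dot2 Ginv A C) (dot2 Ginv B D) μ ν l κ
      + 2 * KN (dot2 Ginv A D) (dot2 Ginv B C) μ ν l κ := by
  have expand : ∀ σ τ σ' τ',
      KN A B μ ν σ τ * Ginv σ σ' * Ginv τ τ' * KN C D σ' τ' l κ
      = ((A μ σ * B ν τ) * Ginv σ σ' * Ginv τ τ' * (C σ' l * D τ' κ)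
        + (A μ σ * B ν τ) * Ginv σ σ' * Ginv τ τ' * (D σ' l * C τ' κ)
        + (A ν σ * B μ τ) * Ginv σ σ' * Ginv τ τ' * (D σ' κ * C τ' l)
        + (A ν σ * B μ τ) * Ginv σ σ' * Ginv τ τ' * (C σ' κ * D τ' l)
        + (B ν σ * A μ τ) * Ginv σ σ' * Ginv τ τ' * (D σ' κ * C τ' l)
        + (B ν σ * A μ τ) * Ginv σ σ' * Ginv τ τ' * (C σ' κ * D τ' l)
        + (B μ σ * A ν τ) * Ginv σ σ' * Ginv τ τ' * (C σ' l * D τ' κ)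
        + (B μ σ * A ν τ) * Ginv σ σ' * Ginv τ τ' * (D σ' l * C τ' κ))
      - ((A μ σ * B ν τ) * Ginv σ σ' * Ginv τ τ' * (D σ' κ * C τ' l)
        + (A μ σ * B ν τ) * Ginv σ σ' * Ginv τ τ' * (C σ' κ * D τ' l)
        + (A ν σ * B μ τ) * Ginv σ σ' * Ginv τ τ' * (C σ' l * D τ' κ)
        + (A ν σ * B μ τ) * Ginv σ σ' * Ginv τ τ' * (D σ' l * C τ' κ)
        + (B ν σ * A μ τ) * Ginv σ σ' * Ginv τ τ' * (C σ' l * D τ' κ)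
        + (B ν σ * A μ τ) * Ginv σ σ' * Ginv τ τ' * (D σ' l * C τ' κ)
        + (B μ σ * A ν τ) * Ginv σ σ' * Ginv τ τ' * (D σ' κ * C τ' l)
        + (B μ σ * A ν τ) * Ginv σ σ' * Ginv τ τ' * (C σ' κ * D τ' l)) := by
    intros; simp only [KN]; ring
  simp only [dot4, expand, Finset.sum_add_distrib, Finset.sum_sub_distrib]
  simp only [quad_factor]
  simp only [KN]
  ring

set_option linter.unusedSectionVars false in
private lemma trA (Ginv X : ι → ι → ℝ) (hG : ∀ a b, Ginv a b = Ginv b a) :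
    (∑ a, ∑ b, Ginv a b * X a b) = tr2 Ginv X := by
  calc (∑ a, ∑ b, Ginv a b * X a b)
      = ∑ a, ∑ b, Ginv b a * X a b :=
        Finset.sum_congr rfl fun a _ => Finset.sum_congr rfl fun b _ => by rw [hG a b]
    _ = ∑ b, ∑ a, Ginv b a * X a b := swapo _
    _ = tr2 Ginv X := rfl

set_option linter.unusedSectionVars false in
private lemma cross_eq (Ginv X Y : ι → ι → ℝ) (hG : ∀ a b, Ginv a b = Ginv b a) :
    (∑ μ, ∑ μ', ∑ ν, ∑ ν', Ginv μ μ' * Ginv ν ν' * (X ν μ' * Y μ ν'))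
      = tr2 Ginv (dot2 Ginv X Y) := by
  have h : tr2 Ginv (dot2 Ginv X Y)
      = ∑ a, ∑ b, ∑ c, ∑ d, Ginv a b * (X b c * Ginv c d * Y d a) := by
    simp only [tr2, dot2, Finset.mul_sum]
  rw [h, sum4_rev]
  refine Finset.sum_congr rfl fun μ _ => Finset.sum_congr rfl fun μ' _ =>
    Finset.sum_congr rfl fun ν _ => Finset.sum_congr rfl fun ν' _ => ?_
  rw [hG μ μ', hG ν ν']
  ring

set_option linter.unusedSectionVars false in
private lemma ftr4_KN (Ginv X Y : ι → ι → ℝ) (hG : ∀ a b, Ginv a b = Ginv b a) :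
    ftr4 Ginv (KN X Y) = 2 * (tr2 Ginv X * tr2 Ginv Y)
      - tr2 Ginv (dot2 Ginv X Y) - tr2 Ginv (dot2 Ginv Y X) := by
  have expand4 : ∀ μ μ' ν ν', Ginv μ μ' * Ginv ν ν' * KN X Y μ ν μ' ν'
      = (Ginv μ μ' * X μ μ') * (Ginv ν ν' * Y ν ν')
        - Ginv μ μ' * Ginv ν ν' * (X ν μ' * Y μ ν')
        - Ginv μ μ' * Ginv ν ν' * (Y ν μ' * X μ ν')
        + (Ginv μ μ' * Y μ μ') * (Ginv ν ν' * X ν ν') := by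
    intros; simp only [KN]; ring
  simp only [ftr4, expand4, Finset.sum_add_distrib, Finset.sum_sub_distrib]
  rw [fact2, fact2, cross_eq Ginv X Y hG, cross_eq Ginv Y X hG,
      trA Ginv X hG, trA Ginv Y hG]
  ring

set_option maxHeartbeats 4000000 in
/-- Under the projector hypotheses,
`(T·T)_{μν}{}^{μν} = 4(n−1)(n−2)²(n−3)·ρ²`. -/
theorem Tgst_dot_Tgst_full_trace {n : ℕ} (hn : 4 ≤ n) (hcard : Fintype.card ι = n)
    (Gbar Ginv g P : ι → ι → ℝ) (ρ : ℝ)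
    (hGsymm : ∀ μ ν, Gbar μ ν = Gbar ν μ)
    (hGinv : ∀ μ l, ∑ ν, Gbar μ ν * Ginv ν l = if μ = l then (1 : ℝ) else 0)
    (hsplit : ∀ μ ν, Gbar μ ν = g μ ν + P μ ν)
    (hgsymm : ∀ μ ν, g μ ν = g ν μ) (hPsymm : ∀ μ ν, P μ ν = P ν μ)
    (hgg : ∀ μ ν, dot2 Ginv g g μ ν = g μ ν)
    (hPP : ∀ μ ν, dot2 Ginv P P μ ν = P μ ν)
    (hgP : ∀ μ ν, dot2 Ginv g P μ ν = 0)
    (htrg : tr2 Ginv g = 2)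
    (htrP : tr2 Ginv P = (n : ℝ) - 2)
    :
    ftr4 Ginv (dot4 Ginv (Tgst n ρ g P) (Tgst n ρ g P)) =
      4 * ((n : ℝ) - 1) * ((n : ℝ) - 2) ^ 2 * ((n : ℝ) - 3) * ρ ^ 2 := by
  -- Ginv is symmetric
  have hGis : ∀ a b, Ginv a b = Ginv b a := by
    have hMN : (Matrix.of Gbar) * (Matrix.of Ginv) = 1 := by
      ext μ l
      simpa [Matrix.mul_apply, Matrix.one_apply] using hGinv μ l
    have hMT : (Matrix.of Gbar).transpose = Matrix.of Gbar := by
      ext a b; exact hGsymm b a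
    have hNT : (Matrix.of Ginv).transpose = Matrix.of Ginv := by
      calc (Matrix.of Ginv).transpose
          = (Matrix.of Ginv).transpose * ((Matrix.of Gbar) * (Matrix.of Ginv)) := by
            rw [hMN, mul_one]
        _ = ((Matrix.of Ginv).transpose * (Matrix.of Gbar).transpose) * (Matrix.of Ginv) := by
            rw [Matrix.mul_assoc, hMT]
        _ = ((Matrix.of Gbar) * (Matrix.of Ginv)).transpose * (Matrix.of Ginv) := by
            rw [Matrix.transpose_mul]
        _ = Matrix.of Ginv := by rw [hMN]; simp
    intro a b
    have := congrArg (fun M => M a b) hNT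
    simpa [Matrix.transpose_apply] using this.symm
  -- dot2 P g = 0
  have hPg : ∀ μ κ, dot2 Ginv P g μ κ = 0 := by
    intro μ κ
    have h : dot2 Ginv P g μ κ = dot2 Ginv g P κ μ := by
      simp only [dot2]
      rw [Finset.sum_comm]
      refine Finset.sum_congr rfl fun l _ => Finset.sum_congr rfl fun ν _ => ?_
      rw [hPsymm μ ν, hgsymm l κ, hGis ν l]
      ring
    rw [h, hgP]
  -- function-level versions
  have hgg' : dot2 Ginv g g = g := funext fun μ => funext fun ν => hgg μ ν
  have hPP' : dot2 Ginv P P = P := funext fun μ => funext fun ν => hPP μ ν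
  have hgP' : dot2 Ginv g P = fun _ _ => (0 : ℝ) := funext fun μ => funext fun ν => hgP μ ν
  have hPg' : dot2 Ginv P g = fun _ _ => (0 : ℝ) := funext fun μ => funext fun ν => hPg μ ν
  -- pointwise formula for T·T
  have hTT : ∀ μ ν l κ, dot4 Ginv (Tgst n ρ g P) (Tgst n ρ g P) μ ν l κ =
      ρ ^ 2 * (((n : ℝ) - 2) ^ 2 * ((n : ℝ) - 3) ^ 2 * KN g g μ ν l κ
        + 4 * KN P P μ ν l κ + 2 * ((n : ℝ) - 3) ^ 2 * KN g P μ ν l κ) := by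
    intro μ ν l κ
    have step : dot4 Ginv (Tgst n ρ g P) (Tgst n ρ g P) μ ν l κ =
        ρ ^ 2 * (((n : ℝ) - 2) * ((n : ℝ) - 3) / 2 * (((n : ℝ) - 2) * ((n : ℝ) - 3) / 2))
            * dot4 Ginv (KN g g) (KN g g) μ ν l κ
        + ρ ^ 2 * (((n : ℝ) - 2) * ((n : ℝ) - 3) / 2) * dot4 Ginv (KN g g) (KN P P) μ ν l κ
        - ρ ^ 2 * (((n : ℝ) - 2) * ((n : ℝ) - 3) / 2 * ((n : ℝ) - 3))
            * dot4 Ginv (KN g g) (KN g P) μ ν l κ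
        + ρ ^ 2 * (((n : ℝ) - 2) * ((n : ℝ) - 3) / 2) * dot4 Ginv (KN P P) (KN g g) μ ν l κ
        + ρ ^ 2 * dot4 Ginv (KN P P) (KN P P) μ ν l κ
        - ρ ^ 2 * ((n : ℝ) - 3) * dot4 Ginv (KN P P) (KN g P) μ ν l κ
        - ρ ^ 2 * (((n : ℝ) - 2) * ((n : ℝ) - 3) / 2 * ((n : ℝ) - 3))
            * dot4 Ginv (KN g P) (KN g g) μ ν l κ
        - ρ ^ 2 * ((n : ℝ) - 3) * dot4 Ginv (KN g P) (KN P P) μ ν l κ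
        + ρ ^ 2 * (((n : ℝ) - 3) * ((n : ℝ) - 3)) * dot4 Ginv (KN g P) (KN g P) μ ν l κ := by
      have expandT : ∀ σ τ σ' τ',
          Tgst n ρ g P μ ν σ τ * Ginv σ σ' * Ginv τ τ' * Tgst n ρ g P σ' τ' l κ =
          ρ ^ 2 * (((n : ℝ) - 2) * ((n : ℝ) - 3) / 2 * (((n : ℝ) - 2) * ((n : ℝ) - 3) / 2))
              * (KN g g μ ν σ τ * Ginv σ σ' * Ginv τ τ' * KN g g σ' τ' l κ)
          + ρ ^ 2 * (((n : ℝ) - 2) * ((n : ℝ) - 3) / 2)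
              * (KN g g μ ν σ τ * Ginv σ σ' * Ginv τ τ' * KN P P σ' τ' l κ)
          - ρ ^ 2 * (((n : ℝ) - 2) * ((n : ℝ) - 3) / 2 * ((n : ℝ) - 3))
              * (KN g g μ ν σ τ * Ginv σ σ' * Ginv τ τ' * KN g P σ' τ' l κ)
          + ρ ^ 2 * (((n : ℝ) - 2) * ((n : ℝ) - 3) / 2)
              * (KN P P μ ν σ τ * Ginv σ σ' * Ginv τ τ' * KN g g σ' τ' l κ)
          + ρ ^ 2 * (KN P P μ ν σ τ * Ginv σ σ' * Ginv τ τ' * KN P P σ' τ' l κ)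
          - ρ ^ 2 * ((n : ℝ) - 3)
              * (KN P P μ ν σ τ * Ginv σ σ' * Ginv τ τ' * KN g P σ' τ' l κ)
          - ρ ^ 2 * (((n : ℝ) - 2) * ((n : ℝ) - 3) / 2 * ((n : ℝ) - 3))
              * (KN g P μ ν σ τ * Ginv σ σ' * Ginv τ τ' * KN g g σ' τ' l κ)
          - ρ ^ 2 * ((n : ℝ) - 3)
              * (KN g P μ ν σ τ * Ginv σ σ' * Ginv τ τ' * KN P P σ' τ' l κ)
          + ρ ^ 2 * (((n : ℝ) - 3) * ((n : ℝ) - 3))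
              * (KN g P μ ν σ τ * Ginv σ σ' * Ginv τ τ' * KN g P σ' τ' l κ) := by
        intros; simp only [Tgst]; ring
      simp only [dot4, expandT, Finset.sum_add_distrib, Finset.sum_sub_distrib,
        ← Finset.mul_sum]
    rw [step]
    simp only [dot4_KN_KN, hgg', hPP', hgP', hPg']
    simp only [KN]
    ring
  -- reduce to ftr4 of the three KN blocks
  have hmain : ftr4 Ginv (dot4 Ginv (Tgst n ρ g P) (Tgst n ρ g P)) =
      ρ ^ 2 * (((n : ℝ) - 2) ^ 2 * ((n : ℝ) - 3) ^ 2) * ftr4 Ginv (KN g g)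
      + ρ ^ 2 * 4 * ftr4 Ginv (KN P P)
      + ρ ^ 2 * (2 * ((n : ℝ) - 3) ^ 2) * ftr4 Ginv (KN g P) := by
    have expandF : ∀ μ μ' ν ν',
        Ginv μ μ' * Ginv ν ν' *
          (ρ ^ 2 * (((n : ℝ) - 2) ^ 2 * ((n : ℝ) - 3) ^ 2 * KN g g μ ν μ' ν'
            + 4 * KN P P μ ν μ' ν' + 2 * ((n : ℝ) - 3) ^ 2 * KN g P μ ν μ' ν')) =
        ρ ^ 2 * (((n : ℝ) - 2) ^ 2 * ((n : ℝ) - 3) ^ 2)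
            * (Ginv μ μ' * Ginv ν ν' * KN g g μ ν μ' ν')
        + ρ ^ 2 * 4 * (Ginv μ μ' * Ginv ν ν' * KN P P μ ν μ' ν')
        + ρ ^ 2 * (2 * ((n : ℝ) - 3) ^ 2) * (Ginv μ μ' * Ginv ν ν' * KN g P μ ν μ' ν') := by
      intros; ring
    simp only [ftr4, hTT, expandF, Finset.sum_add_distrib, ← Finset.mul_sum]
  rw [hmain, ftr4_KN Ginv g g hGis, ftr4_KN Ginv P P hGis, ftr4_KN Ginv g P hGis,
    hgg', hPP', hgP', hPg', htrg, htrP]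
  have htr0 : tr2 Ginv (fun _ _ => (0 : ℝ)) = 0 := by simp [tr2]
  rw [htr0]
  ring
end

section
/- Under the projector hypotheses with ρ ≠ 0, let ℓ : ι → ℝ be a vector with Σ_ν P_{μν}ℓ^ν = 0 for all μ, write ℓ_μ := Σ_ν Ḡ_{μν}ℓ^ν and ℓ² := Σ_{μ,ν} ℓ^μ Ḡ_{μν} ℓ^ν, and assume ℓ² ≠ 0. Then the projector P can be recovered from T = ρ[((n−2)(n−3)/2)(g⊙g) + (P⊙P) − (n−3)(g⊙P)] by the formula P_{λκ} = −(1/((n−1)(n−3)·ρ·ℓ²)) · Σ_{μ,ν} [T_{μλνκ} − ((n−2)(n−3)/2)·ρ·(Ḡ⊙Ḡ)_{μλνκ}] ℓ^μ ℓ^ν, for all indices λ, κ. -/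
open Finset

variable {ι : Type*} [Fintype ι] [DecidableEq ι]

/-- Under the projector hypotheses with `ρ ≠ 0`, for a vector `ℓ`
annihilated by `P` with `ℓ² ≠ 0`, the projector can be recovered as
`P_{λκ} = −(1/((n−1)(n−3)ρℓ²)) Σ_{μ,ν} [T_{μλνκ} − ((n−2)(n−3)/2)ρ(Ḡ⊙Ḡ)_{μλνκ}] ℓ^μ ℓ^ν`. -/
theorem projector_recovery_4d {n : ℕ} (hn : 4 ≤ n) (hcard : Fintype.card ι = n)
    (Gbar Ginv g P : ι → ι → ℝ) (ρ : ℝ)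
    (hGsymm : ∀ μ ν, Gbar μ ν = Gbar ν μ)
    (hGinv : ∀ μ l, ∑ ν, Gbar μ ν * Ginv ν l = if μ = l then (1 : ℝ) else 0)
    (hsplit : ∀ μ ν, Gbar μ ν = g μ ν + P μ ν)
    (hgsymm : ∀ μ ν, g μ ν = g ν μ) (hPsymm : ∀ μ ν, P μ ν = P ν μ)
    (hgg : ∀ μ ν, dot2 Ginv g g μ ν = g μ ν)
    (hPP : ∀ μ ν, dot2 Ginv P P μ ν = P μ ν)
    (hgP : ∀ μ ν, dot2 Ginv g P μ ν = 0)
    (htrg : tr2 Ginv g = 2)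
    (htrP : tr2 Ginv P = (n : ℝ) - 2)
    (hρ : ρ ≠ 0)
    (ℓ : ι → ℝ)
    (hPℓ : ∀ μ, ∑ ν, P μ ν * ℓ ν = 0)
    (hℓsq : ∑ μ, ∑ ν, ℓ μ * Gbar μ ν * ℓ ν ≠ 0) :
    ∀ l κ,
      P l κ =
        -(1 / (((n : ℝ) - 1) * ((n : ℝ) - 3) * ρ
            * (∑ μ, ∑ ν, ℓ μ * Gbar μ ν * ℓ ν)))
          * ∑ μ, ∑ ν,
              (Tgst n ρ g P μ l ν κ
                - ((n : ℝ) - 2) * ((n : ℝ) - 3) / 2 * ρ * KN Gbar Gbar μ l ν κ)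
                * ℓ μ * ℓ ν := by

  intro l κ
  have hn4 : (4:ℝ) ≤ (n:ℝ) := by exact_mod_cast hn
  have hn3 : ((n:ℝ) - 3) ≠ 0 := by linarith
  have hn1 : ((n:ℝ) - 1) ≠ 0 := by linarith
  set k : ℝ := ((n:ℝ) - 1) * ((n:ℝ) - 3) with hk
  set L : ℝ := ∑ μ, ∑ ν, ℓ μ * Gbar μ ν * ℓ ν with hLdef
  have hgl : ∀ μ, ∑ ν, g μ ν * ℓ ν = ∑ ν, Gbar μ ν * ℓ ν := by
    intro μ
    have h1 : ∑ ν, Gbar μ ν * ℓ ν = ∑ ν, (g μ ν * ℓ ν + P μ ν * ℓ ν) :=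
      Finset.sum_congr rfl (fun ν _ => by rw [hsplit]; ring)
    rw [h1, Finset.sum_add_distrib, hPℓ μ, add_zero]
  have hinner : ∀ μ, (∑ ν, (Tgst n ρ g P μ l ν κ
        - ((n:ℝ) - 2) * ((n:ℝ) - 3) / 2 * ρ * KN Gbar Gbar μ l ν κ) * ℓ μ * ℓ ν)
      = ρ * (-k) * ℓ μ * ((∑ ν, Gbar μ ν * ℓ ν) * P l κ
          - (∑ ν, Gbar l ν * ℓ ν) * P μ κ) := by
    intro μ
    have step : ∀ ν, (Tgst n ρ g P μ l ν κ
          - ((n:ℝ) - 2) * ((n:ℝ) - 3) / 2 * ρ * KN Gbar Gbar μ l ν κ) * ℓ μ * ℓ ν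
        = (ρ * ℓ μ * (2 * (1 - ((n:ℝ)-2)*((n:ℝ)-3)/2) * P l κ - k * g l κ)) * (P μ ν * ℓ ν)
          + (ρ * ℓ μ * (-(2 * (1 - ((n:ℝ)-2)*((n:ℝ)-3)/2)) * P μ κ + k * g μ κ)) * (P l ν * ℓ ν)
          + (ρ * ℓ μ * (-k * P l κ)) * (g μ ν * ℓ ν)
          + (ρ * ℓ μ * (k * P μ κ)) * (g l ν * ℓ ν) := by
      intro ν
      simp only [Tgst, KN, hsplit, hk]
      ring
    rw [Finset.sum_congr rfl (fun ν _ => step ν)]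
    simp only [Finset.sum_add_distrib, ← Finset.mul_sum]
    rw [hPℓ μ, hPℓ l, hgl μ, hgl l]
    ring
  have e5 : ∑ μ, P μ κ * ℓ μ = 0 := by
    have h1 : ∑ μ, P μ κ * ℓ μ = ∑ μ, P κ μ * ℓ μ :=
      Finset.sum_congr rfl (fun μ _ => by rw [hPsymm])
    rw [h1, hPℓ κ]
  have e6 : ∑ μ, ℓ μ * ∑ ν, Gbar μ ν * ℓ ν = L := by
    rw [hLdef]
    exact Finset.sum_congr rfl (fun μ _ => by
      rw [Finset.mul_sum]
      exact Finset.sum_congr rfl (fun ν _ => by ring))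
  have houter : (∑ μ, ∑ ν, (Tgst n ρ g P μ l ν κ
        - ((n:ℝ) - 2) * ((n:ℝ) - 3) / 2 * ρ * KN Gbar Gbar μ l ν κ) * ℓ μ * ℓ ν)
      = ρ * (-k) * (L * P l κ) := by
    rw [Finset.sum_congr rfl (fun μ _ => hinner μ)]
    have h2 : ∀ μ, ρ * (-k) * ℓ μ * ((∑ ν, Gbar μ ν * ℓ ν) * P l κ
          - (∑ ν, Gbar l ν * ℓ ν) * P μ κ)
        = (ρ * (-k) * P l κ) * (ℓ μ * ∑ ν, Gbar μ ν * ℓ ν)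
          - (ρ * (-k) * (∑ ν, Gbar l ν * ℓ ν)) * (P μ κ * ℓ μ) := fun μ => by ring
    rw [Finset.sum_congr rfl (fun μ _ => h2 μ), Finset.sum_sub_distrib,
      ← Finset.mul_sum, ← Finset.mul_sum, e5, e6]
    ring
  rw [houter]
  have hL : L ≠ 0 := hℓsq
  have hk0 : k ≠ 0 := mul_ne_zero hn1 hn3
  field_simp
end

section
/- Under the projector hypotheses, the 4-tensor T = ρ[((n−2)(n−3)/2)(g⊙g) + (P⊙P) − (n−3)(g⊙P)] has vanishing partial trace: T_{μν}{}^ν{}_κ = 0 for all indices μ, κ (this is the algebraic form of the statement that the generalized Schwarzschild–Tangherlini curvature satisfies the Λ-vacuum Einstein equations). -/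
open Finset

variable {ι : Type*} [Fintype ι] [DecidableEq ι]

/-- Under the projector hypotheses, the gST curvature tensor `T`
has vanishing partial trace: `T_{μν}{}^ν{}_κ = 0` (the algebraic form of the
Λ-vacuum Einstein equations). -/
theorem Tgst_traceless {n : ℕ} (hn : 4 ≤ n) (hcard : Fintype.card ι = n)
    (Gbar Ginv g P : ι → ι → ℝ) (ρ : ℝ)
    (hGsymm : ∀ μ ν, Gbar μ ν = Gbar ν μ)
    (hGinv : ∀ μ l, ∑ ν, Gbar μ ν * Ginv ν l = if μ = l then (1 : ℝ) else 0)
    (hsplit : ∀ μ ν, Gbar μ ν = g μ ν + P μ ν)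
    (hgsymm : ∀ μ ν, g μ ν = g ν μ) (hPsymm : ∀ μ ν, P μ ν = P ν μ)
    (hgg : ∀ μ ν, dot2 Ginv g g μ ν = g μ ν)
    (hPP : ∀ μ ν, dot2 Ginv P P μ ν = P μ ν)
    (hgP : ∀ μ ν, dot2 Ginv g P μ ν = 0)
    (htrg : tr2 Ginv g = 2)
    (htrP : tr2 Ginv P = (n : ℝ) - 2)
    :
    ∀ μ κ, ptr4 Ginv (Tgst n ρ g P) μ κ = 0 := by

  -- Ginv is symmetric
  have hGinvsymm : ∀ μ ν, Ginv μ ν = Ginv ν μ := by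
    open Matrix in
    have hMN : (Matrix.of Gbar) * (Matrix.of Ginv) = 1 := by
      ext i j
      simpa [Matrix.mul_apply, Matrix.one_apply] using hGinv i j
    have hNM : (Matrix.of Ginv) * (Matrix.of Gbar) = 1 :=
      mul_eq_one_comm.mp hMN
    have hMT : (Matrix.of Gbar)ᵀ = Matrix.of Gbar := by
      ext i j; exact hGsymm j i
    have hNT : (Matrix.of Ginv)ᵀ = Matrix.of Ginv := by
      have h1 : (Matrix.of Ginv)ᵀ * ((Matrix.of Gbar) * (Matrix.of Ginv))
          = (Matrix.of Ginv) := by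
        rw [← Matrix.mul_assoc, ← hMT, ← Matrix.transpose_mul, hMN,
          Matrix.transpose_one, Matrix.one_mul]
      rw [hMN, Matrix.mul_one] at h1
      exact h1
    intro μ ν
    have := congrFun (congrFun hNT μ) ν
    simpa [Matrix.transpose_apply] using this.symm
  -- partial trace of a Kulkarni–Nomizu product
  have key : ∀ (A B : ι → ι → ℝ), (∀ a b, A a b = A b a) →
      (∀ a b, B a b = B b a) → ∀ μ κ, ptr4 Ginv (KN A B) μ κ =
      dot2 Ginv A B μ κ + dot2 Ginv B A μ κ
        - tr2 Ginv A * B μ κ - tr2 Ginv B * A μ κ := by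
    intro A B hA hB μ κ
    have h1 : (∑ ν, ∑ ν', Ginv ν ν' * (A μ ν' * B ν κ)) = dot2 Ginv A B μ κ := by
      rw [Finset.sum_comm]
      refine Finset.sum_congr rfl fun a _ => Finset.sum_congr rfl fun b _ => ?_
      rw [hGinvsymm b a]; ring
    have h2 : (∑ ν, ∑ ν', Ginv ν ν' * (A ν ν' * B μ κ)) = tr2 Ginv A * B μ κ := by
      rw [tr2, Finset.sum_mul]
      refine Finset.sum_congr rfl fun a _ => ?_
      rw [Finset.sum_mul]
      refine Finset.sum_congr rfl fun b _ => ?_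
      rw [hGinvsymm a b, hA a b]; ring
    have h3 : (∑ ν, ∑ ν', Ginv ν ν' * (A μ κ * B ν ν')) = tr2 Ginv B * A μ κ := by
      rw [tr2, Finset.sum_mul]
      refine Finset.sum_congr rfl fun a _ => ?_
      rw [Finset.sum_mul]
      refine Finset.sum_congr rfl fun b _ => ?_
      rw [hGinvsymm a b, hB a b]; ring
    have h4 : (∑ ν, ∑ ν', Ginv ν ν' * (A ν κ * B μ ν')) = dot2 Ginv B A μ κ := by
      rw [Finset.sum_comm]
      refine Finset.sum_congr rfl fun a _ => Finset.sum_congr rfl fun b _ => ?_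
      rw [hGinvsymm b a]; ring
    calc ptr4 Ginv (KN A B) μ κ
        = (∑ ν, ∑ ν', Ginv ν ν' * (A μ ν' * B ν κ))
          - (∑ ν, ∑ ν', Ginv ν ν' * (A ν ν' * B μ κ))
          - (∑ ν, ∑ ν', Ginv ν ν' * (A μ κ * B ν ν'))
          + (∑ ν, ∑ ν', Ginv ν ν' * (A ν κ * B μ ν')) := by
          simp only [ptr4, KN, ← Finset.sum_add_distrib, ← Finset.sum_sub_distrib]
          refine Finset.sum_congr rfl fun a _ => Finset.sum_congr rfl fun b _ => ?_
          ring
      _ = _ := by rw [h1, h2, h3, h4]; ring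
  -- the transposed cross contraction also vanishes
  have hPg : ∀ μ κ, dot2 Ginv P g μ κ = 0 := by
    intro μ κ
    have : dot2 Ginv P g μ κ = dot2 Ginv g P κ μ := by
      simp only [dot2]
      rw [Finset.sum_comm]
      refine Finset.sum_congr rfl fun a _ => Finset.sum_congr rfl fun b _ => ?_
      rw [hGinvsymm b a, hPsymm μ b, hgsymm a κ]; ring
    rw [this, hgP]
  intro μ κ
  have expand : ptr4 Ginv (Tgst n ρ g P) μ κ =
      ρ * (((n : ℝ) - 2) * ((n : ℝ) - 3) / 2 * ptr4 Ginv (KN g g) μ κ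
        + ptr4 Ginv (KN P P) μ κ - ((n : ℝ) - 3) * ptr4 Ginv (KN g P) μ κ) := by
    simp only [ptr4, Tgst, Finset.mul_sum, ← Finset.sum_add_distrib,
      ← Finset.sum_sub_distrib]
    refine Finset.sum_congr rfl fun a _ => Finset.sum_congr rfl fun b _ => ?_
    ring
  rw [expand, key g g hgsymm hgsymm, key P P hPsymm hPsymm, key g P hgsymm hPsymm,
    hgg, hPP, hgP, hPg, htrg, htrP]
  ring
end

section
/- Let r_H ∈ ℝ, b > r_H, let k ≥ 2 be a natural number, μ ≠ 0 and C ≠ 0 real constants. Suppose f(s) = (s − r_H)^k · g(s) on [r_H, b), where g : [r_H, b) → ℝ is continuous with g(r_H) = C, and f is nowhere zero on (r_H, b). Let u : (r_H, b) → (0, ∞) be differentiable with f(s)·u'(s) = μ·u(s) for all s ∈ (r_H, b). Then lim_{s → r_H⁺} (s − r_H)^{k−1} · log u(s) = −μ/(C(k−1)); in particular this limit is nonzero, so log u blows up like a negative power of (s − r_H) and u behaves like exp(D/(s − r_H)^{k−1}) with D = −μ/(C(k−1)). -/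
open Set Filter Topology

lemma aux_mono_17 {a b : ℝ} (hab : a < b) {F F' : ℝ → ℝ}
    (hF : ∀ s ∈ Set.Ioc a b, HasDerivAt F (F' s) s)
    (h0 : ∀ s ∈ Set.Ioc a b, 0 ≤ F' s) :
    ∀ s ∈ Set.Ioc a b, F s ≤ F b := by
  intro s hs
  have hmono : MonotoneOn F (Set.Ioc a b) := by
    apply monotoneOn_of_deriv_nonneg (convex_Ioc a b)
    · intro x hx
      exact (hF x hx).continuousAt.continuousWithinAt
    · intro x hx
      rw [interior_Ioc] at hx
      exact (hF x (Ioo_subset_Ioc_self hx)).differentiableAt.differentiableWithinAt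
    · intro x hx
      rw [interior_Ioc] at hx
      rw [(hF x (Ioo_subset_Ioc_self hx)).deriv]
      exact h0 x (Ioo_subset_Ioc_self hx)
  exact hmono hs ⟨hab, le_refl b⟩ hs.2

lemma aux_psi_17 (rH a : ℝ) (m : ℕ) (hm : 1 ≤ m) {s : ℝ} (hs : rH < s) :
    HasDerivAt (fun t => a / (t - rH) ^ m) (-(a * m) / (s - rH) ^ (m + 1)) s := by
  have hne : (s - rH) ≠ 0 := sub_ne_zero.mpr hs.ne'
  have hd : HasDerivAt (fun t : ℝ => (t - rH) ^ m) ((m : ℝ) * (s - rH) ^ (m - 1) * 1) s :=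
    ((hasDerivAt_id s).sub_const rH).pow m
  have h := (hasDerivAt_const s a).div hd (pow_ne_zero m hne)
  refine h.congr_deriv ?_
  have h2 : ((s - rH) ^ m) ^ 2 = (s - rH) ^ (m - 1) * (s - rH) ^ (m + 1) := by
    rw [← pow_add, ← pow_mul]
    congr 1
    omega
  rw [h2]
  field_simp
  ring



/-- if `f` has a zero of order `k ≥ 2` at `r_H` and
`u : (r_H, b) → (0,∞)` solves `f·u' = μ·u`, then
`(s − r_H)^{k−1}·log u(s) → −μ/(C(k−1))` as `s → r_H⁺`, a nonzero limit,
so `u` has an essential singularity at `r_H`. -/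
theorem multiple_root_essential_singularity (rH b : ℝ) (hb : rH < b)
    (k : ℕ) (hk : 2 ≤ k) (μ C : ℝ) (hμ : μ ≠ 0) (hC : C ≠ 0)
    (f g : ℝ → ℝ)
    (hfg : ∀ s ∈ Set.Ico rH b, f s = (s - rH) ^ k * g s)
    (hg : ContinuousOn g (Set.Ico rH b)) (hgC : g rH = C)
    (hf0 : ∀ s ∈ Set.Ioo rH b, f s ≠ 0)
    (u : ℝ → ℝ) (hupos : ∀ s ∈ Set.Ioo rH b, 0 < u s)
    (hud : ∀ s ∈ Set.Ioo rH b, DifferentiableAt ℝ u s)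
    (hode : ∀ s ∈ Set.Ioo rH b, f s * deriv u s = μ * u s) :
    Filter.Tendsto (fun s => (s - rH) ^ (k - 1) * Real.log (u s))
        (nhdsWithin rH (Set.Ioi rH)) (nhds (-μ / (C * ((k : ℝ) - 1)))) ∧
      -μ / (C * ((k : ℝ) - 1)) ≠ 0 := by
  set m := k - 1 with hmdef
  have hm1 : 1 ≤ m := by omega
  have hkm : k = m + 1 := by omega
  have hmR : (m : ℝ) = (k : ℝ) - 1 := by
    rw [hmdef, Nat.cast_sub (by omega), Nat.cast_one]
  have hmpos : (0 : ℝ) < m := by exact_mod_cast Nat.pos_of_ne_zero (by omega)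
  clear_value m
  have hmne : (m : ℝ) ≠ 0 := ne_of_gt hmpos
  have hkR : (0:ℝ) < (k : ℝ) - 1 := by rw [← hmR]; exact hmpos
  have hD : -μ / (C * ((k : ℝ) - 1)) ≠ 0 :=
    div_ne_zero (neg_ne_zero.mpr hμ) (mul_ne_zero hC (ne_of_gt hkR))
  refine ⟨?_, hD⟩
  set D := -μ / (C * ((k : ℝ) - 1)) with hDdef
  have hDm : D = -(μ / C) / m := by
    rw [hDdef, hmR]
    field_simp
  clear_value D
  -- g is nonzero on Ioo
  have hg0 : ∀ s ∈ Ioo rH b, g s ≠ 0 := by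
    intro s hs
    have hf := hf0 s hs
    rw [hfg s ⟨hs.1.le, hs.2⟩] at hf
    exact right_ne_zero_of_mul hf
  -- derivative of log u
  have hL : ∀ s ∈ Ioo rH b,
      HasDerivAt (fun t => Real.log (u t)) ((μ / g s) / (s - rH) ^ (m + 1)) s := by
    intro s hs
    have hu := hupos s hs
    have h1 := (Real.hasDerivAt_log hu.ne').comp s (hud s hs).hasDerivAt
    refine h1.congr_deriv ?_
    have hfe := hfg s ⟨hs.1.le, hs.2⟩
    have hode' := hode s hs
    have hx : s - rH ≠ 0 := sub_ne_zero.mpr hs.1.ne'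
    have hgs := hg0 s hs
    rw [hfe] at hode'
    rw [← hkm]
    field_simp at hode' ⊢
    nlinarith [hode', pow_ne_zero k hx]
  -- main limit
  rw [Metric.tendsto_nhds]
  intro ε hε
  set ε' := ε / 2 * m with hε'def
  have hε' : (0 : ℝ) < ε' := by positivity
  -- find δ
  have hgt : Tendsto g (𝓝[Ico rH b] rH) (𝓝 C) := by
    have h := hg rH ⟨le_refl rH, hb⟩
    simpa [ContinuousWithinAt, hgC] using h
  have hq : Tendsto (fun s => μ / g s) (𝓝[Ico rH b] rH) (𝓝 (μ / C)) :=
    tendsto_const_nhds.div hgt hC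
  have hev : {s : ℝ | dist (μ / g s) (μ / C) < ε'} ∈ 𝓝[Ico rH b] rH :=
    hq (Metric.ball_mem_nhds _ hε')
  obtain ⟨δ0, hδ0, hball⟩ := Metric.mem_nhdsWithin_iff.mp hev
  set δ := min (rH + δ0 / 2) ((rH + b) / 2) with hδdef
  have hδ1 : rH < δ := lt_min (by linarith) (by linarith)
  have hδb : δ < b := lt_of_le_of_lt (min_le_right _ _) (by linarith)
  have hδle : δ ≤ rH + δ0 / 2 := min_le_left _ _
  clear_value δ
  have hδsub : Ioc rH δ ⊆ Ioo rH b := fun s hs => ⟨hs.1, lt_of_le_of_lt hs.2 hδb⟩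
  have hqδ : ∀ s ∈ Ioc rH δ, |μ / g s - μ / C| ≤ ε' := by
    intro s hs
    have hmem : s ∈ Metric.ball rH δ0 ∩ Ico rH b := by
      constructor
      · rw [Metric.mem_ball, Real.dist_eq]
        have h1 : s - rH > 0 := sub_pos.mpr hs.1
        have h2 : s ≤ rH + δ0 / 2 := hs.2.trans hδle
        rw [abs_of_pos h1]; linarith
      · exact ⟨hs.1.le, lt_of_le_of_lt hs.2 hδb⟩
    have := hball hmem
    rw [Set.mem_setOf_eq, Real.dist_eq] at this
    exact this.le
  set a1 := -(μ / C + ε') / m with ha1def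
  set a2 := -(μ / C - ε') / m with ha2def
  have ha1m : -(a1 * m) = μ / C + ε' := by rw [ha1def]; field_simp
  have ha2m : -(a2 * m) = μ / C - ε' := by rw [ha2def]; field_simp
  have ha1D : a1 = D - ε / 2 := by
    rw [ha1def, hDm, hε'def]; field_simp; ring
  have ha2D : a2 = D + ε / 2 := by
    rw [ha2def, hDm, hε'def]; field_simp; ring
  clear_value a1 a2
  -- key monotonicity bounds
  have key1 : ∀ s ∈ Ioc rH δ,
      a1 / (s - rH) ^ m - Real.log (u s) ≤ a1 / (δ - rH) ^ m - Real.log (u δ) := by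
    apply aux_mono_17 hδ1 (F' := fun s => (-(a1 * m) - μ / g s) / (s - rH) ^ (m + 1))
    · intro s hs
      have h := (aux_psi_17 rH a1 m hm1 hs.1).sub (hL s (hδsub hs))
      refine h.congr_deriv ?_
      rw [sub_div]
    · intro s hs
      apply div_nonneg _ (le_of_lt (pow_pos (sub_pos.mpr hs.1) _))
      rw [ha1m]
      have := (abs_le.mp (hqδ s hs)).2
      linarith
  have key2 : ∀ s ∈ Ioc rH δ,
      Real.log (u s) - a2 / (s - rH) ^ m ≤ Real.log (u δ) - a2 / (δ - rH) ^ m := by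
    apply aux_mono_17 hδ1 (F' := fun s => (μ / g s - -(a2 * m)) / (s - rH) ^ (m + 1))
    · intro s hs
      have h := (hL s (hδsub hs)).sub (aux_psi_17 rH a2 m hm1 hs.1)
      refine h.congr_deriv ?_
      rw [sub_div]
    · intro s hs
      apply div_nonneg _ (le_of_lt (pow_pos (sub_pos.mpr hs.1) _))
      rw [ha2m]
      have := (abs_le.mp (hqδ s hs)).1
      linarith
  set M1 := a1 / (δ - rH) ^ m - Real.log (u δ) with hM1def
  set M2 := Real.log (u δ) - a2 / (δ - rH) ^ m with hM2def
  set K := |M1| + |M2| + 1 with hKdef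
  have hK : (0 : ℝ) < K := by positivity
  clear_value M1 M2 K
  have hw0 : Tendsto (fun s : ℝ => (s - rH) ^ m) (𝓝[>] rH) (𝓝 0) := by
    have hc : ContinuousAt (fun s : ℝ => (s - rH) ^ m) rH := by fun_prop
    have h : Tendsto (fun s : ℝ => (s - rH) ^ m) (𝓝[>] rH) (𝓝 ((rH - rH) ^ m)) :=
      hc.tendsto.mono_left nhdsWithin_le_nhds
    simpa [zero_pow (show m ≠ 0 by omega)] using h
  have hsmall : ∀ᶠ s in 𝓝[>] rH, (s - rH) ^ m < ε / (2 * K) :=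
    hw0.eventually_lt_const (by positivity)
  have hIoc : ∀ᶠ s in 𝓝[>] rH, s ∈ Ioc rH δ := by
    filter_upwards [Ioo_mem_nhdsGT_of_mem (⟨le_refl rH, hδ1⟩ : rH ∈ Ico rH δ)] with s hs
    exact ⟨hs.1, hs.2.le⟩
  filter_upwards [hsmall, hIoc] with s hsm hsIoc
  have hx : (0 : ℝ) < s - rH := sub_pos.mpr hsIoc.1
  have hxm : (0 : ℝ) < (s - rH) ^ m := pow_pos hx m
  have h1 := key1 s hsIoc
  have h2 := key2 s hsIoc
  have e1 : (s - rH) ^ m * (a1 / (s - rH) ^ m) = a1 := by field_simp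
  have e2 : (s - rH) ^ m * (a2 / (s - rH) ^ m) = a2 := by field_simp
  have hKb : K * (s - rH) ^ m < ε / 2 := by
    have := mul_lt_mul_of_pos_left hsm hK
    calc K * (s - rH) ^ m < K * (ε / (2 * K)) := this
      _ = ε / 2 := by field_simp
  have hM1b : M1 * (s - rH) ^ m ≤ K * (s - rH) ^ m := by
    apply mul_le_mul_of_nonneg_right _ hxm.le
    have := le_abs_self M1
    have := abs_nonneg M2
    rw [hKdef]; linarith
  have hM2b : M2 * (s - rH) ^ m ≤ K * (s - rH) ^ m := by
    apply mul_le_mul_of_nonneg_right _ hxm.le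
    have := le_abs_self M2
    have := abs_nonneg M1
    rw [hKdef]; linarith
  -- multiply h1, h2 by (s - rH)^m
  have hb1 : a1 - M1 * (s - rH) ^ m ≤ (s - rH) ^ m * Real.log (u s) := by
    have := mul_le_mul_of_nonneg_left h1 hxm.le
    rw [mul_sub, e1] at this
    linarith
  have hb2 : (s - rH) ^ m * Real.log (u s) ≤ a2 + M2 * (s - rH) ^ m := by
    have := mul_le_mul_of_nonneg_left h2 hxm.le
    rw [mul_sub, e2] at this
    linarith
  rw [Real.dist_eq, abs_lt]
  constructor
  · rw [ha1D] at hb1; linarith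
  · rw [ha2D] at hb2; linarith
end
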